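/- Let s ≥ 2, ϑ ≥ 0, and set ω0 = 1 + ϑ/s², ω1 = T_s′(ω0)/T_s″(ω0), b_j = T_j″(ω0)/T_j′(ω0)² for 2 ≤ j ≤ s and b_0 = b_1 = b_2 (second-order RKC2 coefficients), a_j = 1 − b_j T_j(ω0), with μ_j, ν_j, κ_j, γ_j the RKC coefficients, and let c_0 = 0, c_1 = μ_1, c_j = ν_j c_{j−1} + κ_j c_{j−2} + μ_j + γ_j. Let f : ℝⁿ → ℝⁿ be differentiable at ŷ ∈ ℝⁿ with Jacobian f′(ŷ), let Δt > 0, K ≥ 0, and suppose Δ̂f_1, …, Δ̂f_{s−1} ∈ ℝⁿ satisfy Δ̂f_j = c_j Δt f′(ŷ) f(ŷ) + r_j with ‖r_j‖₂ ≤ K for all j. Define d̂_0 = 0, d̂_1 = μ_1 Δt f(ŷ), d̂_j = ν_j d̂_{j−1} + κ_j d̂_{j−2} + μ_j Δt (f(ŷ) + Δ̂f_{j−1}) + γ_j Δt f(ŷ) for 2 ≤ j ≤ s, and ŷ⁺ = ŷ + d̂_s. Then ‖ŷ⁺ − ŷ − Δt f(ŷ) − (Δt²/2) f′(ŷ) f(ŷ)‖₂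 ≤ K Δt · Σ_{j=2}^{s} (b_s/b_j) U_{s−j}(ω0) μ_j. -/

import Mathlib

noncomputable section

/-- Chebyshev polynomial of the first kind, evaluated in an arbitrary ring. -/
def chebT (R : Type*) [Ring R] : ℕ → R → R
  | 0, _ => 1
  | 1, x => x
  | n + 2, x => 2 * x * chebT R (n + 1) x - chebT R n x

/-- Chebyshev polynomial of the second kind, evaluated in an arbitrary ring. -/
def chebU (R : Type*) [Ring R] : ℕ → R → R
  | 0, _ => 1
  | 1, x => 2 * x
  | n + 2, x => 2 * x * chebU R (n + 1) x - chebU R n x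

/-- Spectral norm of a real matrix: operator norm induced by the Euclidean norms. -/
def specNorm {m n : ℕ} (A : Matrix (Fin m) (Fin n) ℝ) : ℝ :=
  ‖(Matrix.toEuclideanLin A).toContinuousLinearMap‖


namespace RKC2Aux

def dT : ℕ → ℝ → ℝ
  | 0, _ => 0
  | 1, _ => 1
  | n + 2, x => 2 * chebT ℝ (n + 1) x + 2 * x * dT (n + 1) x - dT n x

def ddT : ℕ → ℝ → ℝ
  | 0, _ => 0
  | 1, _ => 0
  | n + 2, x => 4 * dT (n + 1) x + 2 * x * ddT (n + 1) x - ddT n x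

theorem hasDerivAt_chebT : ∀ (n : ℕ) (x : ℝ), HasDerivAt (fun y => chebT ℝ n y) (dT n x) x
  | 0, x => by simpa [chebT, dT] using hasDerivAt_const x (1 : ℝ)
  | 1, x => by simpa [chebT, dT] using hasDerivAt_id' x
  | n + 2, x => by
    have h1 := hasDerivAt_chebT (n + 1) x
    have h0 := hasDerivAt_chebT n x
    have h : HasDerivAt (fun y => 2 * y * chebT ℝ (n + 1) y - chebT ℝ n y)
        (2 * chebT ℝ (n + 1) x + 2 * x * dT (n + 1) x - dT n x) x := by
      have h2 := (((hasDerivAt_id x).const_mul (2:ℝ)).mul h1).sub h0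
      convert h2 using 1
      · rfl
      · rfl
      · rfl
      · simp only [id_eq]
        ring
    have heq : (fun y => chebT ℝ (n+2) y) = fun y => 2 * y * chebT ℝ (n + 1) y - chebT ℝ n y := by
      funext y; simp [chebT]
    rw [heq]
    simpa [dT] using h

theorem hasDerivAt_dT : ∀ (n : ℕ) (x : ℝ), HasDerivAt (fun y => dT n y) (ddT n x) x
  | 0, x => by simpa [dT, ddT] using hasDerivAt_const x (0 : ℝ)
  | 1, x => by simpa [dT, ddT] using hasDerivAt_const x (1 : ℝ)
  | n + 2, x => by
    have h1 := hasDerivAt_dT (n + 1) x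
    have h0 := hasDerivAt_dT n x
    have hT := hasDerivAt_chebT (n + 1) x
    have h : HasDerivAt (fun y => 2 * chebT ℝ (n + 1) y + 2 * y * dT (n + 1) y - dT n y)
        (4 * dT (n + 1) x + 2 * x * ddT (n + 1) x - ddT n x) x := by
      have h2 := ((hT.const_mul (2:ℝ)).add (((hasDerivAt_id x).const_mul (2:ℝ)).mul h1)).sub h0
      convert h2 using 1
      · rfl
      · rfl
      · rfl
      · simp only [id_eq]
        ring
    have heq : (fun y => dT (n+2) y) = fun y => 2 * chebT ℝ (n + 1) y + 2 * y * dT (n + 1) y - dT n y := by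
      funext y; simp [dT]
    rw [heq]
    simpa [ddT] using h

theorem chebT_one_le (x : ℝ) (hx : 1 ≤ x) :
    ∀ n, 1 ≤ chebT ℝ n x ∧ chebT ℝ n x ≤ chebT ℝ (n + 1) x
  | 0 => by constructor <;> simp [chebT, hx]
  | n + 1 => by
    obtain ⟨h1, h2⟩ := chebT_one_le x hx n
    have h1' : 1 ≤ chebT ℝ (n + 1) x := le_trans h1 h2
    refine ⟨h1', ?_⟩
    have he : chebT ℝ (n + 2) x = 2 * x * chebT ℝ (n + 1) x - chebT ℝ n x := by simp [chebT]
    nlinarith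

theorem chebU_one_le (x : ℝ) (hx : 1 ≤ x) :
    ∀ n, 1 ≤ chebU ℝ n x ∧ chebU ℝ n x ≤ chebU ℝ (n + 1) x
  | 0 => by constructor <;> simp [chebU] <;> nlinarith
  | n + 1 => by
    obtain ⟨h1, h2⟩ := chebU_one_le x hx n
    have h1' : 1 ≤ chebU ℝ (n + 1) x := le_trans h1 h2
    refine ⟨h1', ?_⟩
    have he : chebU ℝ (n + 2) x = 2 * x * chebU ℝ (n + 1) x - chebU ℝ n x := by simp [chebU]
    nlinarith

theorem dT_prop (x : ℝ) (hx : 1 ≤ x) :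
    ∀ n, 0 ≤ dT n x ∧ dT n x ≤ dT (n + 1) x ∧ 1 ≤ dT (n + 1) x
  | 0 => by refine ⟨le_refl _, ?_, ?_⟩ <;> simp [dT]
  | n + 1 => by
    obtain ⟨h0, h1, h2⟩ := dT_prop x hx n
    have hT := (chebT_one_le x hx (n + 1)).1
    have he : dT (n + 2) x = 2 * chebT ℝ (n + 1) x + 2 * x * dT (n + 1) x - dT n x := by
      simp [dT]
    have h0' : 0 ≤ dT (n + 1) x := le_trans zero_le_one h2
    refine ⟨h0', ?_, ?_⟩ <;> nlinarith

theorem ddT_prop (x : ℝ) (hx : 1 ≤ x) :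
    ∀ n, 0 ≤ ddT n x ∧ ddT n x ≤ ddT (n + 1) x
  | 0 => by refine ⟨le_refl _, ?_⟩ <;> simp [ddT]
  | n + 1 => by
    obtain ⟨h0, h1⟩ := ddT_prop x hx n
    have hd0 := (dT_prop x hx n).2.2
    have he : ddT (n + 2) x = 4 * dT (n + 1) x + 2 * x * ddT (n + 1) x - ddT n x := by
      simp [ddT]
    have h0' : 0 ≤ ddT (n + 1) x := le_trans h0 h1
    refine ⟨h0', ?_⟩
    nlinarith

theorem ddT_four_le (x : ℝ) (hx : 1 ≤ x) : ∀ n, 4 ≤ ddT (n + 2) x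
  | 0 => by norm_num [ddT, dT]
  | n + 1 => le_trans (ddT_four_le x hx n) (ddT_prop x hx (n + 2)).2

end RKC2Aux

set_option maxHeartbeats 1600000 in
/-- one step of the mixed-precision RKC2 scheme, with
`Δ̂f_j = c_j Δt f′(ŷ) f(ŷ) + r_j` and `‖r_j‖₂ ≤ K`, satisfies
`‖ŷ⁺ − ŷ − Δt f(ŷ) − (Δt²/2) f′(ŷ) f(ŷ)‖₂ ≤ K Δt Σ_{j=2}^s (b_s/b_j) U_{s−j}(ω0) μ_j`. -/
theorem mixed_precision_rkc2_consistency
    {n : ℕ} (s : ℕ) (hs : 2 ≤ s) (ϑ : ℝ) (hϑ : 0 ≤ ϑ)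
    (ω0 ω1 : ℝ) (b μ ν κ γ c : ℕ → ℝ)
    (hω0 : ω0 = 1 + ϑ / (s : ℝ) ^ 2)
    (hω1 : ω1 = deriv (fun x => chebT ℝ s x) ω0 / deriv (deriv (fun x => chebT ℝ s x)) ω0)
    (hb : ∀ j, 2 ≤ j → j ≤ s →
      b j = deriv (deriv (fun x => chebT ℝ j x)) ω0 / (deriv (fun x => chebT ℝ j x) ω0) ^ 2)
    (hb0 : b 0 = b 2) (hb1 : b 1 = b 2)
    (hμ1 : μ 1 = b 1 * ω1)
    (hμ : ∀ j, 2 ≤ j → j ≤ s → μ j = 2 * ω1 * b j / b (j - 1))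
    (hν : ∀ j, 2 ≤ j → j ≤ s → ν j = 2 * ω0 * b j / b (j - 1))
    (hκ : ∀ j, 2 ≤ j → j ≤ s → κ j = -(b j / b (j - 2)))
    (hγ : ∀ j, 2 ≤ j → j ≤ s → γ j = -(μ j * (1 - b (j - 1) * chebT ℝ (j - 1) ω0)))
    (hc0 : c 0 = 0) (hc1 : c 1 = μ 1)
    (hc : ∀ j, 2 ≤ j → j ≤ s → c j = ν j * c (j - 1) + κ j * c (j - 2) + μ j + γ j)
    (f : EuclideanSpace ℝ (Fin n) → EuclideanSpace ℝ (Fin n))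
    (yhat : EuclideanSpace ℝ (Fin n)) (Δt : ℝ) (hΔt : 0 < Δt)
    (f' : EuclideanSpace ℝ (Fin n) →L[ℝ] EuclideanSpace ℝ (Fin n))
    (hf' : HasFDerivAt f f' yhat)
    (K : ℝ) (hK : 0 ≤ K)
    (Δf r : ℕ → EuclideanSpace ℝ (Fin n))
    (hΔf : ∀ j, 1 ≤ j → j ≤ s - 1 → Δf j = (c j * Δt) • f' (f yhat) + r j)
    (hr : ∀ j, 1 ≤ j → j ≤ s - 1 → ‖r j‖ ≤ K)
    (d : ℕ → EuclideanSpace ℝ (Fin n))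
    (hd0 : d 0 = 0) (hd1 : d 1 = (μ 1 * Δt) • f yhat)
    (hd : ∀ j, 2 ≤ j → j ≤ s →
      d j = ν j • d (j - 1) + κ j • d (j - 2) + (μ j * Δt) • (f yhat + Δf (j - 1))
        + (γ j * Δt) • f yhat)
    (yhat' : EuclideanSpace ℝ (Fin n)) (hyhat' : yhat' = yhat + d s) :
    ‖yhat' - yhat - Δt • f yhat - (Δt ^ 2 / 2) • f' (f yhat)‖ ≤
      K * Δt * ∑ j ∈ Finset.Icc 2 s, b s / b j * chebU ℝ (s - j) ω0 * μ j := by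
  classical
  have hx : (1 : ℝ) ≤ ω0 := by
    rw [hω0]
    have h1 : 0 ≤ ϑ / (s : ℝ) ^ 2 := div_nonneg hϑ (by positivity)
    linarith
  have hD1 : ∀ j : ℕ, deriv (fun y => chebT ℝ j y) ω0 = RKC2Aux.dT j ω0 :=
    fun j => (RKC2Aux.hasDerivAt_chebT j ω0).deriv
  have hD2 : ∀ j : ℕ, deriv (deriv (fun y => chebT ℝ j y)) ω0 = RKC2Aux.ddT j ω0 := by
    intro j
    have h : deriv (fun y => chebT ℝ j y) = fun y => RKC2Aux.dT j y :=
      funext fun y => (RKC2Aux.hasDerivAt_chebT j y).deriv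
    rw [h]
    exact (RKC2Aux.hasDerivAt_dT j ω0).deriv
  have hdTpos : ∀ j : ℕ, 1 ≤ j → 0 < RKC2Aux.dT j ω0 := by
    intro j hj
    obtain ⟨k, rfl⟩ := Nat.exists_eq_add_of_le hj
    have h := (RKC2Aux.dT_prop ω0 hx k).2.2
    rw [Nat.add_comm]
    linarith
  have hddTpos : ∀ j : ℕ, 2 ≤ j → 0 < RKC2Aux.ddT j ω0 := by
    intro j hj
    obtain ⟨k, rfl⟩ := Nat.exists_eq_add_of_le hj
    have h := RKC2Aux.ddT_four_le ω0 hx k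
    rw [Nat.add_comm]
    linarith
  have hbval : ∀ j, 2 ≤ j → j ≤ s → b j = RKC2Aux.ddT j ω0 / (RKC2Aux.dT j ω0) ^ 2 := by
    intro j h2 hjs
    rw [hb j h2 hjs, hD1, hD2]
  have hbpos2 : ∀ j, 2 ≤ j → j ≤ s → 0 < b j := by
    intro j h2 hjs
    rw [hbval j h2 hjs]
    exact div_pos (hddTpos j h2) (pow_pos (hdTpos j (by omega)) 2)
  have hbpos : ∀ j, j ≤ s → 0 < b j := by
    intro j hjs
    rcases j with _ | _ | m
    · rw [hb0]; exact hbpos2 2 le_rfl hs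
    · rw [hb1]; exact hbpos2 2 le_rfl hs
    · exact hbpos2 _ (by omega) hjs
  have hω1val : ω1 = RKC2Aux.dT s ω0 / RKC2Aux.ddT s ω0 := by rw [hω1, hD1, hD2]
  have hω1pos : 0 < ω1 := by
    rw [hω1val]; exact div_pos (hdTpos s (by omega)) (hddTpos s hs)
  -- the explicit formula for c
  have hcEq : ∀ j, j ≤ s → c j = ω1 * b j * RKC2Aux.dT j ω0 := by
    intro j
    induction j using Nat.strong_induction_on with
    | _ j ih =>
      intro hjs
      rcases j with _ | _ | m
      · simp [hc0, RKC2Aux.dT]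
      · rw [hc1, hμ1]; simp [RKC2Aux.dT]; ring
      · have h2 : 2 ≤ m + 2 := by omega
        have hm1s : m + 1 ≤ s := by omega
        have hms : m ≤ s := by omega
        have e1 := ih (m + 1) (by omega) hm1s
        have e0 := ih m (by omega) hms
        have hbm1 := (hbpos (m + 1) hm1s).ne'
        have hbm := (hbpos m hms).ne'
        have i1 : m + 2 - 1 = m + 1 := by omega
        have i2 : m + 2 - 2 = m := by omega
        have hcv := hc (m + 2) h2 hjs
        rw [i1, i2] at hcv
        have hνv := hν (m + 2) h2 hjs; rw [i1] at hνv
        have hκv := hκ (m + 2) h2 hjs; rw [i2] at hκv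
        have hμv := hμ (m + 2) h2 hjs; rw [i1] at hμv
        have hγv := hγ (m + 2) h2 hjs; rw [i1] at hγv
        have hdTe : RKC2Aux.dT (m + 2) ω0
            = 2 * chebT ℝ (m + 1) ω0 + 2 * ω0 * RKC2Aux.dT (m + 1) ω0 - RKC2Aux.dT m ω0 := by
          simp [RKC2Aux.dT]
        rw [hcv, e1, e0, hγv, hμv, hνv, hκv, hdTe]
        field_simp
        ring
  have hdEq : ∀ j, j ≤ s →
      d j = ((ω1 * b j * RKC2Aux.dT j ω0) * Δt) • f yhat
        + ((ω1 ^ 2 * b j * RKC2Aux.ddT j ω0 / 2) * Δt ^ 2) • f' (f yhat)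
        + ∑ k ∈ Finset.Icc 2 j,
            (Δt * (b j / b k * chebU ℝ (j - k) ω0 * μ k)) • r (k - 1) := by
    intro j
    induction j using Nat.strong_induction_on with
    | _ j ih =>
      intro hjs
      rcases j with _ | _ | m
      · simp [hd0, RKC2Aux.dT, RKC2Aux.ddT]
      · rw [hd1, hμ1]
        have he : Finset.Icc 2 1 = (∅ : Finset ℕ) := by decide
        simp only [he, Finset.sum_empty, add_zero]
        simp [RKC2Aux.dT, RKC2Aux.ddT]
        match_scalars <;> ring
      · -- j = m + 2
        have h2 : 2 ≤ m + 2 := by omega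
        have hm1s : m + 1 ≤ s := by omega
        have hms : m ≤ s := by omega
        have ihm1 := ih (m + 1) (by omega) hm1s
        have ihm := ih m (by omega) hms
        have hΔfm := hΔf (m + 1) (by omega) (by omega)
        have hcm1 := hcEq (m + 1) hm1s
        have i1 : m + 2 - 1 = m + 1 := by omega
        have i2 : m + 2 - 2 = m := by omega
        have hdj := hd (m + 2) h2 hjs
        rw [i1, i2] at hdj
        have hνv := hν (m + 2) h2 hjs; rw [i1] at hνv
        have hκv := hκ (m + 2) h2 hjs; rw [i2] at hκv
        have hμv := hμ (m + 2) h2 hjs; rw [i1] at hμv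
        have hγv := hγ (m + 2) h2 hjs; rw [i1] at hγv
        have hbm1 := (hbpos (m + 1) hm1s).ne'
        have hbm := (hbpos m hms).ne'
        have hbm2 := (hbpos (m + 2) hjs).ne'
        have hdTe : RKC2Aux.dT (m + 2) ω0
            = 2 * chebT ℝ (m + 1) ω0 + 2 * ω0 * RKC2Aux.dT (m + 1) ω0 - RKC2Aux.dT m ω0 := by
          simp [RKC2Aux.dT]
        have hddTe : RKC2Aux.ddT (m + 2) ω0
            = 4 * RKC2Aux.dT (m + 1) ω0 + 2 * ω0 * RKC2Aux.ddT (m + 1) ω0 - RKC2Aux.ddT m ω0 := by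
          simp [RKC2Aux.ddT]
        have eF : ν (m + 2) * (ω1 * b (m + 1) * RKC2Aux.dT (m + 1) ω0 * Δt)
            + κ (m + 2) * (ω1 * b m * RKC2Aux.dT m ω0 * Δt)
            + μ (m + 2) * Δt + γ (m + 2) * Δt
            = ω1 * b (m + 2) * RKC2Aux.dT (m + 2) ω0 * Δt := by
          rw [hγv, hμv, hνv, hκv, hdTe]
          field_simp
          ring
        have eG : ν (m + 2) * (ω1 ^ 2 * b (m + 1) * RKC2Aux.ddT (m + 1) ω0 / 2 * Δt ^ 2)
            + κ (m + 2) * (ω1 ^ 2 * b m * RKC2Aux.ddT m ω0 / 2 * Δt ^ 2)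
            + (μ (m + 2) * Δt) * (ω1 * b (m + 1) * RKC2Aux.dT (m + 1) ω0 * Δt)
            = ω1 ^ 2 * b (m + 2) * RKC2Aux.ddT (m + 2) ω0 / 2 * Δt ^ 2 := by
          rw [hμv, hνv, hκv, hddTe]
          field_simp
          ring
        rw [hdj, hΔfm, hcm1, ihm1, ihm]
        rcases m with _ | p
        · -- j = 2
          have he1 : Finset.Icc 2 1 = (∅ : Finset ℕ) := by decide
          have he0 : Finset.Icc 2 0 = (∅ : Finset ℕ) := by decide
          have he2 : Finset.Icc 2 2 = ({2} : Finset ℕ) := Finset.Icc_self 2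
          simp only [he1, he0, he2, Finset.sum_empty, Finset.sum_singleton, add_zero]
          norm_num
          match_scalars
          · linear_combination eF
          · linear_combination eG
          · simp [chebU]
            field_simp
        · -- j = p + 3
          simp only [show p + 1 + 1 = p + 2 from rfl, show p + 1 + 2 = p + 3 from rfl]
            at eF eG hνv hκv hμv hγv hbm1 hbm2 ⊢
          have eR2 : μ (p + 3) * Δt = Δt * (b (p + 3) / b (p + 3) * chebU ℝ 0 ω0 * μ (p + 3)) := by
            simp only [chebU]
            field_simp
          have eR1 : ν (p + 3) * (Δt * (b (p + 2) / b (p + 2) * chebU ℝ 0 ω0 * μ (p + 2)))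
              = Δt * (b (p + 3) / b (p + 2) * chebU ℝ 1 ω0 * μ (p + 2)) := by
            rw [hνv]
            simp only [chebU]
            field_simp
          have hsplit1 : ∑ k ∈ Finset.Icc 2 (p + 3),
                (Δt * (b (p + 3) / b k * chebU ℝ (p + 3 - k) ω0 * μ k)) • r (k - 1)
              = (∑ k ∈ Finset.Icc 2 (p + 1),
                  (Δt * (b (p + 3) / b k * chebU ℝ (p + 3 - k) ω0 * μ k)) • r (k - 1))
                + (Δt * (b (p + 3) / b (p + 2) * chebU ℝ 1 ω0 * μ (p + 2))) • r (p + 1)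
                + (Δt * (b (p + 3) / b (p + 3) * chebU ℝ 0 ω0 * μ (p + 3))) • r (p + 2) := by
            rw [Finset.sum_Icc_succ_top (by omega : 2 ≤ p + 3),
              Finset.sum_Icc_succ_top (by omega : 2 ≤ p + 2)]
            simp only [show p + 1 + 1 = p + 2 from rfl, show p + 2 + 1 = p + 3 from rfl,
              show p + 3 - (p + 2) = 1 from by omega, show p + 3 - (p + 3) = 0 from by omega,
              show p + 2 - 1 = p + 1 from by omega, show p + 3 - 1 = p + 2 from by omega]
          have hsplit2 : ∑ k ∈ Finset.Icc 2 (p + 2),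
                (Δt * (b (p + 2) / b k * chebU ℝ (p + 2 - k) ω0 * μ k)) • r (k - 1)
              = (∑ k ∈ Finset.Icc 2 (p + 1),
                  (Δt * (b (p + 2) / b k * chebU ℝ (p + 2 - k) ω0 * μ k)) • r (k - 1))
                + (Δt * (b (p + 2) / b (p + 2) * chebU ℝ 0 ω0 * μ (p + 2))) • r (p + 1) := by
            rw [Finset.sum_Icc_succ_top (by omega : 2 ≤ p + 2)]
            simp only [show p + 1 + 1 = p + 2 from rfl,
              show p + 2 - (p + 2) = 0 from by omega, show p + 2 - 1 = p + 1 from by omega]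
          have hcomb : ∑ k ∈ Finset.Icc 2 (p + 1),
                (Δt * (b (p + 3) / b k * chebU ℝ (p + 3 - k) ω0 * μ k)) • r (k - 1)
              = ν (p + 3) • ∑ k ∈ Finset.Icc 2 (p + 1),
                  (Δt * (b (p + 2) / b k * chebU ℝ (p + 2 - k) ω0 * μ k)) • r (k - 1)
                + κ (p + 3) • ∑ k ∈ Finset.Icc 2 (p + 1),
                  (Δt * (b (p + 1) / b k * chebU ℝ (p + 1 - k) ω0 * μ k)) • r (k - 1) := by
            rw [Finset.smul_sum, Finset.smul_sum, ← Finset.sum_add_distrib]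
            refine Finset.sum_congr rfl ?_
            intro k hk
            obtain ⟨hk2, hk1⟩ := Finset.mem_Icc.mp hk
            rw [smul_smul, smul_smul, ← add_smul]
            congr 1
            have hU : chebU ℝ (p + 3 - k) ω0
                = 2 * ω0 * chebU ℝ (p + 2 - k) ω0 - chebU ℝ (p + 1 - k) ω0 := by
              obtain ⟨e, he⟩ : ∃ e, p + 1 - k = e := ⟨_, rfl⟩
              have h3 : p + 3 - k = e + 2 := by omega
              have h2' : p + 2 - k = e + 1 := by omega
              rw [h3, h2', he]
              simp [chebU]
            have hbk := (hbpos k (by omega)).ne'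
            rw [hU, hνv, hκv]
            field_simp
            ring
          rw [hsplit1, hsplit2, hcomb]
          match_scalars
          · linear_combination eF
          · linear_combination eG
          · ring
          · linear_combination eR1
          · ring
          · linear_combination eR2
  -- final coefficients
  have hT' := (hdTpos s (by omega)).ne'
  have hT'' := (hddTpos s hs).ne'
  have hbs := hbval s hs le_rfl
  have hCs : ω1 * b s * RKC2Aux.dT s ω0 = 1 := by
    rw [hω1val, hbs]
    field_simp
  have hQs : ω1 ^ 2 * b s * RKC2Aux.ddT s ω0 / 2 = 1 / 2 := by
    rw [hω1val, hbs]
    field_simp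
  have key : yhat' - yhat - Δt • f yhat - (Δt ^ 2 / 2) • f' (f yhat)
      = ∑ k ∈ Finset.Icc 2 s, (Δt * (b s / b k * chebU ℝ (s - k) ω0 * μ k)) • r (k - 1) := by
    rw [hyhat', hdEq s le_rfl, hCs, hQs]
    match_scalars <;> ring
  rw [key]
  have hcoef : ∀ k ∈ Finset.Icc 2 s, 0 ≤ b s / b k * chebU ℝ (s - k) ω0 * μ k := by
    intro k hk
    obtain ⟨hk2, hks⟩ := Finset.mem_Icc.mp hk
    have h1 : 0 ≤ b s / b k := le_of_lt (div_pos (hbpos s le_rfl) (hbpos k hks))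
    have h2 : (0:ℝ) ≤ chebU ℝ (s - k) ω0 :=
      le_trans zero_le_one (RKC2Aux.chebU_one_le ω0 hx (s - k)).1
    have h3 : 0 ≤ μ k := by
      rw [hμ k hk2 hks]
      have := hbpos (k - 1) (by omega)
      have := hbpos k hks
      positivity
    positivity
  calc ‖∑ k ∈ Finset.Icc 2 s, (Δt * (b s / b k * chebU ℝ (s - k) ω0 * μ k)) • r (k - 1)‖
      ≤ ∑ k ∈ Finset.Icc 2 s, ‖(Δt * (b s / b k * chebU ℝ (s - k) ω0 * μ k)) • r (k - 1)‖ :=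
        norm_sum_le _ _
    _ ≤ ∑ k ∈ Finset.Icc 2 s, K * Δt * (b s / b k * chebU ℝ (s - k) ω0 * μ k) := by
        refine Finset.sum_le_sum ?_
        intro k hk
        obtain ⟨hk2, hks⟩ := Finset.mem_Icc.mp hk
        have hnn : 0 ≤ Δt * (b s / b k * chebU ℝ (s - k) ω0 * μ k) :=
          mul_nonneg hΔt.le (hcoef k hk)
        rw [norm_smul, Real.norm_eq_abs, abs_of_nonneg hnn]
        have hrk := hr (k - 1) (by omega) (by omega)
        calc Δt * (b s / b k * chebU ℝ (s - k) ω0 * μ k) * ‖r (k - 1)‖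
            ≤ Δt * (b s / b k * chebU ℝ (s - k) ω0 * μ k) * K :=
              mul_le_mul_of_nonneg_left hrk hnn
          _ = K * Δt * (b s / b k * chebU ℝ (s - k) ω0 * μ k) := by ring
    _ = K * Δt * ∑ j ∈ Finset.Icc 2 s, b s / b j * chebU ℝ (s - j) ω0 * μ j := by
        rw [Finset.mul_sum]
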